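/- If (w_j) is a sequence in the open unit disk with ∑_j (1 − |w_j|) = ∞, then the partial products ∏_{j=1}^N b(z, w_j) converge to 0 uniformly on compact subsets of the disk as N → ∞. -/

import Mathlib

open Filter

/-- The elementary Blaschke factor `b(z,w)`. -/
noncomputable def blaschke (z w : ℂ) : ℂ :=
  if w = 0 then z else (((‖w‖ : ℝ) : ℂ) / w) * ((w - z) / (1 - (starRingEnd ℂ) w * z))

set_option maxHeartbeats 1000000 in
lemma abs_blaschke_le {r : ℝ} (z w : ℂ) (hw : ‖w‖ < 1)
    (hz : ‖z‖ ≤ r) (hr : r < 1) :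
    ‖blaschke z w‖ ≤ 1 - (1 - r) * (1 - ‖w‖) / 2 := by
  set t := ‖w‖ with ht
  set s := ‖z‖ with hs
  have ht0 : 0 ≤ t := norm_nonneg w
  have hs0 : 0 ≤ s := norm_nonneg z
  have hr0 : 0 ≤ r := hs0.trans hz
  clear_value t s
  by_cases h0 : w = 0
  · subst h0
    rw [blaschke, if_pos rfl]
    have : t = 0 := by rw [ht]; simp
    rw [← hs]
    nlinarith
  · have htpos : 0 < t := ht ▸ norm_pos_iff.mpr h0
    set u := (starRingEnd ℂ) w * z with hu
    clear_value u
    have hau : ‖u‖ = t * s := by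
      rw [hu, norm_mul, Complex.norm_conj, ← ht, ← hs]
    have hne : (1 : ℂ) - u ≠ 0 := by
      intro h
      have : u = 1 := by linear_combination -h
      rw [this] at hau
      simp at hau
      nlinarith
    have hD : 0 < ‖1 - u‖ := norm_pos_iff.mpr (by exact hne)
    set x := u.re with hx
    clear_value x
    have hxts : -(t * s) ≤ x := by
      have h : |x| ≤ t * s := by rw [← hau, hx]; exact Complex.abs_re_le_norm u
      linarith [(abs_le.mp h).1]
    have hB : (0:ℝ) ≤ 1 - (1 - r) * (1 - t) / 2 := by nlinarith
    rw [blaschke, if_neg h0, norm_mul, norm_div, norm_div, Complex.norm_real, norm_norm, ← ht,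
      div_self (ne_of_gt htpos), one_mul, ← hu, div_le_iff₀ hD]
    -- squared inequalities
    have hn1 : Complex.normSq (w - z) = t^2 + s^2 - 2*x := by
      rw [Complex.normSq_sub]
      have : (w * (starRingEnd ℂ) z).re = x := by
        rw [hx, hu]
        rw [Complex.mul_re, Complex.mul_re]
        simp [Complex.conj_re, Complex.conj_im]
      rw [this, ← Complex.sq_norm, ← Complex.sq_norm, ← ht, ← hs]
    have hn2 : Complex.normSq (1 - u) = 1 + t^2*s^2 - 2*x := by
      rw [Complex.normSq_sub]
      have h1 : (1 * (starRingEnd ℂ) u).re = x := by simp [hx]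
      rw [h1, ← Complex.sq_norm u, hau, map_one]
      ring
    have step1 : ‖w - z‖ * (1 + t*r) ≤ (t + r) * ‖1 - u‖ := by
      have hpos : (0:ℝ) ≤ (t + r) * ‖1 - u‖ :=
        mul_nonneg (by linarith) (norm_nonneg _)
      have hA : (0:ℝ) ≤ (1+t*r)^2 - (t+r)^2 := by
        nlinarith [mul_nonneg (by nlinarith : (0:ℝ) ≤ 1 - t^2) (by nlinarith : (0:ℝ) ≤ 1 - r^2)]
      have hsum : (0:ℝ) ≤ (t+r)*(1+t*s)+(t+s)*(1+t*r) := by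
        nlinarith [mul_nonneg ht0 hs0, mul_nonneg ht0 hr0,
          mul_nonneg ht0 (mul_nonneg ht0 hs0), mul_nonneg ht0 (mul_nonneg ht0 hr0),
          mul_nonneg ht0 (mul_nonneg hr0 hs0)]
      have hkey1 : (0:ℝ) ≤ (x + t*s) * ((1+t*r)^2 - (t+r)^2) :=
        mul_nonneg (by linarith) hA
      have hkey2 : (0:ℝ) ≤ ((r-s)*(1-t^2)) * ((t+r)*(1+t*s)+(t+s)*(1+t*r)) :=
        mul_nonneg (mul_nonneg (by linarith) (by nlinarith)) hsum
      apply le_of_pow_le_pow_left₀ two_ne_zero hpos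
      rw [mul_pow, mul_pow, Complex.sq_norm, Complex.sq_norm, hn1, hn2]
      nlinarith [hkey1, hkey2]
    have step2 : (t + r) ≤ (1 - (1 - r) * (1 - t) / 2) * (1 + t*r) := by
      nlinarith [mul_nonneg (mul_nonneg (by linarith : (0:ℝ) ≤ 1 - r) (by linarith : (0:ℝ) ≤ 1 - t)) (by nlinarith : (0:ℝ) ≤ 1 - t*r)]
    have h1tr : (0:ℝ) < 1 + t*r := by nlinarith
    have h3 := mul_le_mul_of_nonneg_right step2 (norm_nonneg (1 - u))
    have h4 : ‖w - z‖ * (1 + t*r) ≤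
        ((1 - (1 - r) * (1 - t) / 2) * ‖1 - u‖) * (1 + t*r) := by
      calc ‖w - z‖ * (1 + t*r) ≤ (t + r) * ‖1 - u‖ := step1
        _ ≤ (1 - (1 - r) * (1 - t) / 2) * (1 + t*r) * ‖1 - u‖ := h3
        _ = ((1 - (1 - r) * (1 - t) / 2) * ‖1 - u‖) * (1 + t*r) := by ring
    exact le_of_mul_le_mul_right h4 h1tr

/-- If `(w_j)` is a sequence in the open unit disk with `∑_j (1 − |w_j|) = ∞`, then the
partial products `∏_{j<N} b(z, w_j)` converge to `0` uniformly on compact subsets of the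
disk as `N → ∞`. -/
theorem blaschke_prod_tendsto_zero (w : ℕ → ℂ) (hw : ∀ j, ‖w j‖ < 1)
    (hdiv : ¬ Summable (fun j => 1 - ‖w j‖)) :
    ∀ K ⊆ Metric.ball (0 : ℂ) 1, IsCompact K →
      TendstoUniformlyOn (fun N z => ∏ j ∈ Finset.range N, blaschke z (w j)) 0 atTop K := by
  intro K hK hKc
  rcases K.eq_empty_or_nonempty with hKe | hne
  · subst hKe
    simp [TendstoUniformlyOn]
  · obtain ⟨z₀, hz₀K, hmax'⟩ := hKc.exists_isMaxOn hne continuous_norm.continuousOn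
    have hmax : ∀ z ∈ K, ‖z‖ ≤ ‖z₀‖ := fun z hz => hmax' hz
    set r := ‖z₀‖ with hr
    have hr1 : r < 1 := by
      have := hK hz₀K
      rw [Metric.mem_ball, Complex.dist_eq, sub_zero] at this
      exact this
    set c := (1 - r) / 2 with hc
    have hc0 : 0 < c := by rw [hc]; linarith
    -- the exponential bound
    have hbound : ∀ N, ∀ z ∈ K, ‖∏ j ∈ Finset.range N, blaschke z (w j)‖ ≤
        Real.exp (-(c * ∑ j ∈ Finset.range N, (1 - ‖w j‖))) := by
      intro N z hzK
      rw [norm_prod]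
      have h1 : ∀ j ∈ Finset.range N, ‖blaschke z (w j)‖ ≤
          Real.exp (-(c * (1 - ‖w j‖))) := by
        intro j _
        have h2 := abs_blaschke_le z (w j) (hw j) (hmax z hzK) hr1
        refine h2.trans ?_
        have h3 := Real.add_one_le_exp (-(c * (1 - ‖w j‖)))
        rw [hc]
        rw [hc] at h3
        linarith
      calc ∏ j ∈ Finset.range N, ‖blaschke z (w j)‖
          ≤ ∏ j ∈ Finset.range N, Real.exp (-(c * (1 - ‖w j‖))) :=
            Finset.prod_le_prod (fun j _ => norm_nonneg _) h1
        _ = Real.exp (∑ j ∈ Finset.range N, -(c * (1 - ‖w j‖))) :=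
            (Real.exp_sum _ _).symm
        _ = Real.exp (-(c * ∑ j ∈ Finset.range N, (1 - ‖w j‖))) := by
            congr 1
            rw [Finset.mul_sum, ← Finset.sum_neg_distrib]
    -- the bound tends to zero
    have hS : Tendsto (fun N => ∑ j ∈ Finset.range N, (1 - ‖w j‖)) atTop atTop := by
      rw [← not_summable_iff_tendsto_nat_atTop_of_nonneg (fun j => by linarith [hw j])]
      exact hdiv
    have hexp : Tendsto (fun N => Real.exp (-(c * ∑ j ∈ Finset.range N, (1 - ‖w j‖))))
        atTop (nhds 0) := by
      apply Real.tendsto_exp_atBot.comp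
      exact tendsto_neg_atBot_iff.mpr (hS.const_mul_atTop hc0)
    rw [Metric.tendstoUniformlyOn_iff]
    intro ε hε
    filter_upwards [hexp.eventually_lt_const hε] with N hN z hzK
    rw [dist_comm, Complex.dist_eq]
    simp only [Pi.zero_apply, sub_zero]
    exact lt_of_le_of_lt (hbound N z hzK) hN
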